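/- Let P = (P_w)_{w∈W} be a probability distribution on a finite vocabulary W with all P_w > 0, f_{1,P}(r) = Σ_w r^{1/P_w − 1}, and P_max = max_w P_w. Then E_{Y∼Uniform(0,1)}[(f_{1,P}(Y) − 1)²] ≤ 4|W|·(1 − P_max). -/

import Mathlib

open MeasureTheory Real Set

lemma gumbel_intOn (c : ℝ) (hc : 0 ≤ c) :
    IntegrableOn (fun r : ℝ => r ^ c) (Ioo 0 1) := by
  have := intervalIntegral.intervalIntegrable_rpow' (r := c) (a := 0) (b := 1) (by linarith)
  rw [intervalIntegrable_iff] at this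
  exact this.mono_set (by rw [uIoc_of_le (by norm_num : (0:ℝ) ≤ 1)]; exact Ioo_subset_Ioc_self)

lemma gumbel_intVal (c : ℝ) (hc : 0 ≤ c) :
    ∫ r in Ioo (0:ℝ) 1, r ^ c = 1/(c+1) := by
  rw [← integral_Ioc_eq_integral_Ioo, ← intervalIntegral.integral_of_le (by norm_num : (0:ℝ) ≤ 1),
    integral_rpow (Or.inl (by linarith))]
  rw [Real.one_rpow, Real.zero_rpow (by linarith), sub_zero]

/-- The key pairwise bound. -/
lemma gumbel_pair_bound (x y : ℝ) (hx : 0 < x) (hx1 : x ≤ 1) (hy : 0 < y) (hy1 : y ≤ 1) :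
    1 / ((1/x - 1) + (1/y - 1) + 1) - x * y
      ≤ Real.sqrt (x * (1 - x)) * Real.sqrt (y * (1 - y)) := by
  have hx0 : x ≠ 0 := ne_of_gt hx
  have hy0 : y ≠ 0 := ne_of_gt hy
  have hDx : x ≤ x + y - x * y := by nlinarith
  have hDy : y ≤ x + y - x * y := by nlinarith
  have hDpos : 0 < x + y - x * y := lt_of_lt_of_le hx hDx
  have hD0 : x + y - x * y ≠ 0 := ne_of_gt hDpos
  have hrw : (1/x - 1) + (1/y - 1) + 1 = (x + y - x * y) / (x * y) := by
    field_simp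
    ring
  rw [hrw, one_div_div]
  have htnn : (0:ℝ) ≤ x * y * ((1 - x) * (1 - y)) := by
    have := sub_nonneg.2 hx1; have := sub_nonneg.2 hy1; positivity
  have hLHS : x * y / (x + y - x * y) - x * y
      = (x * y * ((1 - x) * (1 - y))) / (x + y - x * y) := by
    field_simp
    ring
  have hRHS : Real.sqrt (x * (1 - x)) * Real.sqrt (y * (1 - y))
      = Real.sqrt (x * y * ((1 - x) * (1 - y))) := by
    rw [← Real.sqrt_mul (by have := sub_nonneg.2 hx1; positivity)]
    congr 1
    ring
  rw [hLHS, hRHS]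
  have htD : x * y * ((1 - x) * (1 - y)) ≤ (x + y - x * y) ^ 2 := by
    nlinarith [mul_nonneg (sub_nonneg.2 hx1) (sub_nonneg.2 hy1), mul_pos hx hy,
      mul_le_mul_of_nonneg_left hDy hx.le]
  have hst : Real.sqrt (x * y * ((1 - x) * (1 - y))) ≤ x + y - x * y := by
    calc Real.sqrt (x * y * ((1 - x) * (1 - y))) ≤ Real.sqrt ((x + y - x * y) ^ 2) :=
          Real.sqrt_le_sqrt htD
      _ = x + y - x * y := Real.sqrt_sq hDpos.le
  rw [div_le_iff₀ hDpos]
  calc x * y * ((1 - x) * (1 - y))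
      = Real.sqrt (x * y * ((1 - x) * (1 - y))) * Real.sqrt (x * y * ((1 - x) * (1 - y))) :=
        (Real.mul_self_sqrt htnn).symm
    _ ≤ Real.sqrt (x * y * ((1 - x) * (1 - y))) * (x + y - x * y) :=
        mul_le_mul_of_nonneg_left hst (Real.sqrt_nonneg _)

/-- Second-moment bound for the Gumbel-max density deviation:
`E_{Y∼U(0,1)}[(f_{1,P}(Y) − 1)²] ≤ 4 |W| (1 − P_max)`. -/
theorem gumbel_density_second_moment_le {W : Type*} [Fintype W] [Nonempty W]
    (P : W → ℝ) (hpos : ∀ w, 0 < P w) (hsum : ∑ w, P w = 1) :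
    (∫ r in Set.Ioo (0:ℝ) 1, ((∑ w, r ^ (1 / P w - 1)) - 1) ^ 2)
      ≤ 4 * (Fintype.card W : ℝ) * (1 - Finset.univ.sup' Finset.univ_nonempty P) := by
  classical
  have hP1 : ∀ w, P w ≤ 1 := by
    intro w
    rw [← hsum]
    exact Finset.single_le_sum (fun v _ => (hpos v).le) (Finset.mem_univ w)
  have haw : ∀ w, 0 ≤ 1 / P w - 1 := by
    intro w
    have : 1 ≤ 1 / P w := (one_le_div (hpos w)).2 (hP1 w)
    linarith
  set M : ℝ := Finset.univ.sup' Finset.univ_nonempty P with hM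
  obtain ⟨m, -, hm⟩ := Finset.exists_mem_eq_sup' Finset.univ_nonempty P
  have hM1 : M ≤ 1 := by rw [hM, hm]; exact hP1 m
  -- integrability
  have hintA : IntegrableOn
      (fun r : ℝ => ∑ p : W × W, r ^ ((1 / P p.1 - 1) + (1 / P p.2 - 1))) (Ioo 0 1) := by
    apply integrable_finset_sum
    intro p _
    exact gumbel_intOn _ (add_nonneg (haw p.1) (haw p.2))
  have hintB : IntegrableOn (fun r : ℝ => ∑ w, r ^ (1 / P w - 1)) (Ioo 0 1) := by
    apply integrable_finset_sum
    intro w _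
    exact gumbel_intOn _ (haw w)
  have hintB2 : IntegrableOn (fun r : ℝ => 2 * ∑ w, r ^ (1 / P w - 1)) (Ioo 0 1) :=
    hintB.const_mul 2
  have hintAB : IntegrableOn
      (fun r : ℝ => (∑ p : W × W, r ^ ((1 / P p.1 - 1) + (1 / P p.2 - 1)))
        - 2 * ∑ w, r ^ (1 / P w - 1)) (Ioo 0 1) := hintA.sub hintB2
  have hconst : IntegrableOn (fun _ : ℝ => (1:ℝ)) (Ioo 0 1) :=
    integrableOn_const measure_Ioo_lt_top.ne
  -- pointwise identity on (0,1)
  have hpt : EqOn (fun r : ℝ => ((∑ w, r ^ (1 / P w - 1)) - 1) ^ 2)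
      (fun r : ℝ => (∑ p : W × W, r ^ ((1 / P p.1 - 1) + (1 / P p.2 - 1)))
        - 2 * (∑ w, r ^ (1 / P w - 1)) + 1) (Ioo 0 1) := by
    intro r hr
    have hsq : (∑ w, r ^ (1 / P w - 1)) ^ 2
        = ∑ p : W × W, r ^ ((1 / P p.1 - 1) + (1 / P p.2 - 1)) := by
      rw [sq, Finset.sum_mul_sum, Fintype.sum_prod_type]
      exact Finset.sum_congr rfl fun w _ => Finset.sum_congr rfl fun v _ =>
        (Real.rpow_add hr.1 _ _).symm
    simp only
    rw [sub_sq, one_pow, mul_one, hsq]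
  -- compute the integral
  have hI : (∫ r in Set.Ioo (0:ℝ) 1, ((∑ w, r ^ (1 / P w - 1)) - 1) ^ 2)
      = (∑ p : W × W, 1 / ((1 / P p.1 - 1) + (1 / P p.2 - 1) + 1)) - 1 := by
    rw [setIntegral_congr_fun measurableSet_Ioo hpt]
    rw [integral_add hintAB hconst, integral_sub hintA hintB2, integral_const_mul,
      integral_finset_sum _ (fun p _ => gumbel_intOn _ (add_nonneg (haw p.1) (haw p.2))),
      integral_finset_sum _ (fun w _ => gumbel_intOn _ (haw w))]
    have h1 : ∀ w : W, (∫ r in Ioo (0:ℝ) 1, r ^ (1 / P w - 1)) = P w := by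
      intro w
      rw [gumbel_intVal _ (haw w), sub_add_cancel, one_div_one_div]
    have h2 : ∀ p : W × W, (∫ r in Ioo (0:ℝ) 1, r ^ ((1 / P p.1 - 1) + (1 / P p.2 - 1)))
        = 1 / ((1 / P p.1 - 1) + (1 / P p.2 - 1) + 1) := fun p =>
      gumbel_intVal _ (add_nonneg (haw p.1) (haw p.2))
    rw [Finset.sum_congr rfl (fun p _ => h2 p), Finset.sum_congr rfl (fun w _ => h1 w), hsum]
    simp [Real.volume_Ioo]
    ring
  have hPP : (∑ p : W × W, P p.1 * P p.2) = 1 := by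
    rw [Fintype.sum_prod_type, ← Finset.sum_mul_sum, hsum, one_mul]
  have hS : (∑ p : W × W, 1 / ((1 / P p.1 - 1) + (1 / P p.2 - 1) + 1)) - 1
      = ∑ p : W × W, (1 / ((1 / P p.1 - 1) + (1 / P p.2 - 1) + 1) - P p.1 * P p.2) := by
    rw [Finset.sum_sub_distrib, hPP]
  rw [hI, hS]
  set g : W → ℝ := fun w => Real.sqrt (P w * (1 - P w)) with hg
  have hbound : ∀ p : W × W,
      1 / ((1 / P p.1 - 1) + (1 / P p.2 - 1) + 1) - P p.1 * P p.2 ≤ g p.1 * g p.2 :=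
    fun p => gumbel_pair_bound _ _ (hpos p.1) (hP1 p.1) (hpos p.2) (hP1 p.2)
  have hgs : (∑ p : W × W, g p.1 * g p.2) = (∑ w, g w) ^ 2 := by
    rw [Fintype.sum_prod_type, ← Finset.sum_mul_sum, sq]
  have hsum1 : (∑ p : W × W, (1 / ((1 / P p.1 - 1) + (1 / P p.2 - 1) + 1) - P p.1 * P p.2))
      ≤ (∑ w, g w) ^ 2 := by
    rw [← hgs]
    exact Finset.sum_le_sum fun p _ => hbound p
  have hsum2 : (∑ w, g w) ^ 2 ≤ (Fintype.card W : ℝ) * ∑ w, g w ^ 2 := by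
    simpa using sq_sum_le_card_mul_sum_sq (s := Finset.univ) (f := g)
  have hg2 : ∑ w, g w ^ 2 = 1 - ∑ w, (P w) ^ 2 := by
    have hgw : ∀ w : W, g w ^ 2 = P w - P w ^ 2 := by
      intro w
      rw [hg]
      rw [Real.sq_sqrt (by nlinarith [hpos w, hP1 w])]
      ring
    rw [Finset.sum_congr rfl (fun w _ => hgw w), Finset.sum_sub_distrib, hsum]
  have hM2 : M ^ 2 ≤ ∑ w, (P w) ^ 2 := by
    rw [hM, hm]
    exact Finset.single_le_sum (fun v _ => sq_nonneg (P v)) (Finset.mem_univ m)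
  have hcard : (0:ℝ) ≤ (Fintype.card W : ℝ) := Nat.cast_nonneg _
  calc (∑ p : W × W, (1 / ((1 / P p.1 - 1) + (1 / P p.2 - 1) + 1) - P p.1 * P p.2))
      ≤ (Fintype.card W : ℝ) * ∑ w, g w ^ 2 := le_trans hsum1 hsum2
    _ = (Fintype.card W : ℝ) * (1 - ∑ w, (P w) ^ 2) := by rw [hg2]
    _ ≤ 4 * (Fintype.card W : ℝ) * (1 - M) := by
        nlinarith [mul_nonneg hcard (sub_nonneg.2 hM1), mul_nonneg hcard (sub_nonneg.2 hM2),
          mul_nonneg (mul_nonneg hcard (sub_nonneg.2 hM1)) (sub_nonneg.2 hM1)]
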